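/- Let f : ℕ → ℝ be any function with f(k) ≥ 1 for all k and f(k) → ∞ as k → ∞, and set N⁺(k) = ⌈2^{k/2} · k^{3/2} · f(k)⌉. Then the proportion of 2-colorings c : {1,...,N⁺(k)} → {0,1} (out of the 2^{N⁺(k)} total) that contain a monochromatic k-term arithmetic progression tends to 1 as k → ∞. Equivalently, the probability that a uniformly random 2-coloring of {1,...,N⁺(k)} contains a monochromatic k-term arithmetic progression approaches 1 as k → ∞. -/

import Mathlib

/-- The `k`-term arithmetic progression `{a, a+d, ..., a+(k-1)d}` as a finite set. -/
def AP (a d k : ℕ) : Finset ℕ := (Finset.range k).image (fun i => a + i * d)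

/-- `P` is a `k`-term arithmetic progression contained in `{1, ..., n}`. -/
def IsKAP (n k : ℕ) (P : Finset ℕ) : Prop :=
  ∃ a d : ℕ, 1 ≤ a ∧ 1 ≤ d ∧ a + (k - 1) * d ≤ n ∧ P = AP a d k

/-- The coloring `c` of `{1, ..., n}` is constant on `P`. -/
def Mono {n : ℕ} (c : ↥(Finset.Icc 1 n) → Bool) (P : Finset ℕ) : Prop :=
  ∀ x y : ↥(Finset.Icc 1 n), (x : ℕ) ∈ P → (y : ℕ) ∈ P → c x = c y

/-- The coloring `c` of `{1, ..., n}` contains a monochromatic `k`-term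
arithmetic progression. -/
def HasMonoKAP (n k : ℕ) (c : ↥(Finset.Icc 1 n) → Bool) : Prop :=
  ∃ P : Finset ℕ, IsKAP n k P ∧ Mono c P

/-- `N⁺(k) = ⌈2^(k/2) k^(3/2) f(k)⌉`. -/
noncomputable def Nplus (f : ℕ → ℝ) (k : ℕ) : ℕ :=
  ⌈(2 : ℝ) ^ ((k : ℝ) / 2) * (k : ℝ) ^ ((3 : ℝ) / 2) * f k⌉₊

open Finset
section CountPart
variable {α : Type*} [Fintype α] [DecidableEq α]

theorem count_eq_on (Q : Finset α) (v : α → Bool) :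
    (Finset.univ.filter fun c : α → Bool => ∀ x ∈ Q, c x = v x).card * 2 ^ Q.card
      = 2 ^ Fintype.card α := by
  have h1 : (Finset.univ.filter fun c : α → Bool => ∀ x ∈ Q, c x = v x).card
      = Fintype.card {c : α → Bool // ∀ x ∈ Q, c x = v x} := (Fintype.card_subtype _).symm
  have e : {c : α → Bool // ∀ x ∈ Q, c x = v x} ≃ (↥(Qᶜ) → Bool) :=
    { toFun := fun c x => c.1 x.1
      invFun := fun g => ⟨fun x => if h : x ∈ Q then v x else g ⟨x, Finset.mem_compl.mpr h⟩,
        fun x hx => dif_pos hx⟩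
      left_inv := by
        intro c
        apply Subtype.ext
        funext x
        by_cases h : x ∈ Q
        · simp [h, c.2 x h]
        · simp [h]
      right_inv := by
        intro g
        funext x
        have : (x : α) ∉ Q := Finset.mem_compl.mp x.2
        simp [this] }
  rw [h1, Fintype.card_congr e, Fintype.card_fun, Fintype.card_coe, Fintype.card_bool,
    Finset.card_compl, ← pow_add, Nat.sub_add_cancel (Finset.card_le_univ Q)]

theorem count_const_on (Q : Finset α) (hQ : Q.Nonempty) :
    (Finset.univ.filter fun c : α → Bool => ∀ x ∈ Q, ∀ y ∈ Q, c x = c y).card * 2 ^ Q.card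
      = 2 ^ (Fintype.card α + 1) := by
  obtain ⟨q0, hq0⟩ := hQ
  have hsplit : (Finset.univ.filter fun c : α → Bool => ∀ x ∈ Q, ∀ y ∈ Q, c x = c y)
      = (Finset.univ.filter fun c : α → Bool => ∀ x ∈ Q, c x = true)
        ∪ (Finset.univ.filter fun c : α → Bool => ∀ x ∈ Q, c x = false) := by
    ext c
    simp only [Finset.mem_filter, Finset.mem_union, Finset.mem_univ, true_and]
    constructor
    · intro h
      cases hb : c q0 with
      | true => exact Or.inl fun x hx => (h x hx q0 hq0).trans hb
      | false => exact Or.inr fun x hx => (h x hx q0 hq0).trans hb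
    · rintro (h | h) x hx y hy <;> rw [h x hx, h y hy]
  have hdisj : Disjoint (Finset.univ.filter fun c : α → Bool => ∀ x ∈ Q, c x = true)
      (Finset.univ.filter fun c : α → Bool => ∀ x ∈ Q, c x = false) := by
    rw [Finset.disjoint_left]
    intro c h1 h2
    simp only [Finset.mem_filter] at h1 h2
    have := (h1.2 q0 hq0).symm.trans (h2.2 q0 hq0)
    exact absurd this (by simp)
  rw [hsplit, Finset.card_union_of_disjoint hdisj, add_mul,
    count_eq_on Q (fun _ => true), count_eq_on Q (fun _ => false)]
  ring

theorem count_pair_le (Q₁ Q₂ : Finset α) (h1 : Q₁.Nonempty) (h2 : Q₂.Nonempty)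
    (hint : (Q₁ ∩ Q₂).card ≤ 1) :
    (Finset.univ.filter fun c : α → Bool =>
        (∀ x ∈ Q₁, ∀ y ∈ Q₁, c x = c y) ∧ (∀ x ∈ Q₂, ∀ y ∈ Q₂, c x = c y)).card
      * 2 ^ (Q₁.card + Q₂.card) ≤ 2 ^ (Fintype.card α + 2) := by
  have hcards : (Q₁ ∪ Q₂).card + (Q₁ ∩ Q₂).card = Q₁.card + Q₂.card :=
    Finset.card_union_add_card_inter Q₁ Q₂
  rcases (Q₁ ∩ Q₂).eq_empty_or_nonempty with hemp | ⟨z, hz⟩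
  · -- disjoint case: subset of union of 4 fixed-value classes
    obtain ⟨q1, hq1⟩ := h1
    obtain ⟨q2, hq2⟩ := h2
    have hcard : (Q₁ ∪ Q₂).card = Q₁.card + Q₂.card := by
      rw [← hcards, hemp]; simp
    set g : Bool → Bool → Finset (α → Bool) := fun b1 b2 =>
      Finset.univ.filter fun c : α → Bool =>
        ∀ x ∈ Q₁ ∪ Q₂, c x = (fun x => if x ∈ Q₁ then b1 else b2) x with hg
    have hsub : (Finset.univ.filter fun c : α → Bool =>
        (∀ x ∈ Q₁, ∀ y ∈ Q₁, c x = c y) ∧ (∀ x ∈ Q₂, ∀ y ∈ Q₂, c x = c y))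
        ⊆ (g true true ∪ g true false) ∪ (g false true ∪ g false false) := by
      intro c hc
      simp only [Finset.mem_filter, Finset.mem_univ, true_and] at hc
      have key : ∀ x ∈ Q₁ ∪ Q₂, c x = if x ∈ Q₁ then c q1 else c q2 := by
        intro x hx
        by_cases hx1 : x ∈ Q₁
        · rw [if_pos hx1]; exact hc.1 x hx1 q1 hq1
        · rw [if_neg hx1]
          have hx2 : x ∈ Q₂ := by
            rcases Finset.mem_union.mp hx with h | h
            · exact absurd h hx1
            · exact h
          exact hc.2 x hx2 q2 hq2
      simp only [Finset.mem_union, hg, Finset.mem_filter, Finset.mem_univ, true_and]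
      cases hb1 : c q1 <;> cases hb2 : c q2 <;>
        [ (exact Or.inr (Or.inr (fun x hx => by rw [key x (Finset.mem_union.mpr hx), hb1, hb2])));
          (exact Or.inr (Or.inl (fun x hx => by rw [key x (Finset.mem_union.mpr hx), hb1, hb2])));
          (exact Or.inl (Or.inr (fun x hx => by rw [key x (Finset.mem_union.mpr hx), hb1, hb2])));
          (exact Or.inl (Or.inl (fun x hx => by rw [key x (Finset.mem_union.mpr hx), hb1, hb2]))) ]
    have hcount : ∀ b1 b2, (g b1 b2).card * 2 ^ (Q₁.card + Q₂.card) = 2 ^ Fintype.card α := by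
      intro b1 b2
      rw [← hcard]
      exact count_eq_on (Q₁ ∪ Q₂) _
    calc (Finset.univ.filter fun c : α → Bool =>
        (∀ x ∈ Q₁, ∀ y ∈ Q₁, c x = c y) ∧ (∀ x ∈ Q₂, ∀ y ∈ Q₂, c x = c y)).card
          * 2 ^ (Q₁.card + Q₂.card)
        ≤ ((g true true ∪ g true false) ∪ (g false true ∪ g false false)).card
          * 2 ^ (Q₁.card + Q₂.card) :=
          Nat.mul_le_mul_right _ (Finset.card_le_card hsub)
      _ ≤ ((g true true).card + (g true false).card + ((g false true).card + (g false false).card))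
          * 2 ^ (Q₁.card + Q₂.card) := by
          refine Nat.mul_le_mul_right _ ?_
          calc ((g true true ∪ g true false) ∪ (g false true ∪ g false false)).card
              ≤ (g true true ∪ g true false).card + (g false true ∪ g false false).card :=
                Finset.card_union_le _ _
            _ ≤ _ := Nat.add_le_add (Finset.card_union_le _ _) (Finset.card_union_le _ _)
      _ = 2 ^ (Fintype.card α + 2) := by
          rw [add_mul, add_mul, add_mul, hcount, hcount, hcount, hcount]
          ring
  · -- overlapping case
    have hQQ : Q₁.card + Q₂.card ≤ (Q₁ ∪ Q₂).card + 1 := by omega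
    have hsub : (Finset.univ.filter fun c : α → Bool =>
        (∀ x ∈ Q₁, ∀ y ∈ Q₁, c x = c y) ∧ (∀ x ∈ Q₂, ∀ y ∈ Q₂, c x = c y))
        ⊆ Finset.univ.filter fun c : α → Bool => ∀ x ∈ Q₁ ∪ Q₂, ∀ y ∈ Q₁ ∪ Q₂, c x = c y := by
      intro c hc
      simp only [Finset.mem_filter, Finset.mem_univ, true_and] at hc ⊢
      have hz1 := (Finset.mem_inter.mp hz).1
      have hz2 := (Finset.mem_inter.mp hz).2
      have hcz : ∀ x ∈ Q₁ ∪ Q₂, c x = c z := by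
        intro x hx
        rcases Finset.mem_union.mp hx with h | h
        · exact hc.1 x h z hz1
        · exact hc.2 x h z hz2
      intro x hx y hy
      rw [hcz x hx, hcz y hy]
    have hun : (Q₁ ∪ Q₂).Nonempty := h1.mono Finset.subset_union_left
    calc (Finset.univ.filter fun c : α → Bool =>
        (∀ x ∈ Q₁, ∀ y ∈ Q₁, c x = c y) ∧ (∀ x ∈ Q₂, ∀ y ∈ Q₂, c x = c y)).card
          * 2 ^ (Q₁.card + Q₂.card)
        ≤ (Finset.univ.filter fun c : α → Bool =>
            ∀ x ∈ Q₁ ∪ Q₂, ∀ y ∈ Q₁ ∪ Q₂, c x = c y).card * 2 ^ ((Q₁ ∪ Q₂).card + 1) := by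
          exact Nat.mul_le_mul (Finset.card_le_card hsub) (Nat.pow_le_pow_right (by norm_num) hQQ)
      _ = 2 ^ (Fintype.card α + 1) * 2 := by
          rw [pow_succ, ← mul_assoc, count_const_on (Q₁ ∪ Q₂) hun]
      _ = 2 ^ (Fintype.card α + 2) := by ring

end CountPart

theorem mem_AP {a d k x : ℕ} : x ∈ AP a d k ↔ ∃ i < k, x = a + i * d := by
  constructor
  · intro h
    obtain ⟨i, hi, h⟩ := Finset.mem_image.mp h
    exact ⟨i, Finset.mem_range.mp hi, h.symm⟩
  · rintro ⟨i, hi, rfl⟩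
    exact Finset.mem_image.mpr ⟨i, Finset.mem_range.mpr hi, rfl⟩

theorem AP_card {a d k : ℕ} (hd : 1 ≤ d) : (AP a d k).card = k := by
  rw [AP, Finset.card_image_of_injective _ (fun i j h =>
    Nat.eq_of_mul_eq_mul_right hd (Nat.add_left_cancel h)), Finset.card_range]

/-- helper for the two-points-in-two-APs contradiction, case `d < d'`, `x < y`. -/
theorem ap_helper (k D W : ℕ) (hk : 1 ≤ k) (hW : 1 ≤ W) (hWD : 2*k*W ≤ D)
    {d d' a a' x y : ℕ} (hdd : d < d') (hdlow : D - W < d) (hd'high : d' ≤ D)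
    (hd'low : D - W < d') (hxy : x < y)
    (hx1 : x ∈ AP a d k) (hx2 : x ∈ AP a' d' k)
    (hy1 : y ∈ AP a d k) (hy2 : y ∈ AP a' d' k) : False := by
  obtain ⟨i, hi, hxi⟩ := mem_AP.mp hx1
  obtain ⟨i', hi', hxi'⟩ := mem_AP.mp hx2
  obtain ⟨j, hj, hyj⟩ := mem_AP.mp hy1
  obtain ⟨j', hj', hyj'⟩ := mem_AP.mp hy2
  -- basic positivity
  have hWleD : W ≤ D := by
    obtain ⟨KW, hKW⟩ : ∃ m, m = k*W := ⟨_, rfl⟩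
    have h1 : W ≤ KW := by rw [hKW]; exact Nat.le_mul_of_pos_left _ (by omega)
    have h2 : 2*KW ≤ D := by rw [hKW, ← mul_assoc] at *; omega
    omega
  have hdpos : 1 ≤ d := by omega
  have hij : i < j := by
    rcases Nat.lt_or_ge i j with h | h
    · exact h
    · exfalso; have : j * d ≤ i * d := Nat.mul_le_mul_right _ h; omega
  have hij' : i' < j' := by
    rcases Nat.lt_or_ge i' j' with h | h
    · exact h
    · exfalso; have : j' * d' ≤ i' * d' := Nat.mul_le_mul_right _ h; omega
  have hyx : y - x = (j - i) * d := by rw [Nat.sub_mul]; omega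
  have hyx' : y - x = (j' - i') * d' := by rw [Nat.sub_mul]; omega
  have hdvd : d ∣ y - x := ⟨j - i, by rw [hyx]; ring⟩
  have hdvd' : d' ∣ y - x := ⟨j' - i', by rw [hyx']; ring⟩
  have hlcmdvd : Nat.lcm d d' ∣ y - x := Nat.lcm_dvd hdvd hdvd'
  have hle : Nat.lcm d d' ≤ y - x := Nat.le_of_dvd (by omega) hlcmdvd
  have hub : y - x ≤ (k-1) * d := by
    rw [hyx]; exact Nat.mul_le_mul_right _ (by omega)
  set g := Nat.gcd d d' with hgdef
  have hgpos : 0 < g := Nat.gcd_pos_of_pos_left _ (by omega)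
  have hgd : g ∣ d' - d := Nat.dvd_sub (Nat.gcd_dvd_right d d') (Nat.gcd_dvd_left d d')
  have hgle : g ≤ d' - d := Nat.le_of_dvd (by omega) hgd
  have hgW : g ≤ W - 1 := by omega
  -- (k-1)*g < d'
  have hkg : (k-1) * g < d' := by
    have hA : (k-1)*g ≤ (k-1)*(W-1) := Nat.mul_le_mul_left _ (by omega)
    have hB : (k-1)*(W-1) ≤ k*W := Nat.mul_le_mul (by omega) (by omega)
    obtain ⟨KW, hKW⟩ : ∃ m, m = k*W := ⟨_, rfl⟩
    have hC : W ≤ KW := by rw [hKW]; exact Nat.le_mul_of_pos_left _ (by omega)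
    have h2 : 2*KW ≤ D := by rw [hKW, ← mul_assoc] at *; omega
    rw [← hKW] at hB
    omega
  obtain ⟨m', hm'⟩ : g ∣ d' := Nat.gcd_dvd_right d d'
  have hm'k : k ≤ m' := by
    by_contra h
    push_neg at h
    have : d' ≤ (k-1) * g := by
      rw [hm', mul_comm]
      exact Nat.mul_le_mul_right _ (by omega)
    omega
  have hlcm_eq : Nat.lcm d d' = d * m' := by
    have h2 : d * d' = (d * m') * g := by rw [hm']; ring
    rw [Nat.lcm, ← hgdef, h2, Nat.mul_div_cancel _ hgpos]
  have hbig : k * d ≤ Nat.lcm d d' := by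
    rw [hlcm_eq, mul_comm d m']
    exact Nat.mul_le_mul_right _ hm'k
  obtain ⟨A, hA⟩ : ∃ A, A = (k-1)*d := ⟨_, rfl⟩
  obtain ⟨B, hB⟩ : ∃ B, B = k*d := ⟨_, rfl⟩
  have hAB : A + d = B := by
    have hk1 : k - 1 + 1 = k := by omega
    calc A + d = ((k-1)+1)*d := by rw [hA, add_mul, one_mul]
      _ = B := by rw [hk1, hB]
  rw [← hA] at hub
  rw [← hB] at hbig
  omega

theorem ap_inter_sub (k D W : ℕ) (hk : 1 ≤ k) (hW : 1 ≤ W) (hWD : 2*k*W ≤ D)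
    {d a d' a' x y : ℕ}
    (hd : d ∈ Finset.Ioc (D-W) D) (ha : a ∈ Finset.Icc 1 (D-W))
    (hd' : d' ∈ Finset.Ioc (D-W) D) (ha' : a' ∈ Finset.Icc 1 (D-W))
    (hne : (d, a) ≠ (d', a'))
    (hx1 : x ∈ AP a d k) (hx2 : x ∈ AP a' d' k)
    (hy1 : y ∈ AP a d k) (hy2 : y ∈ AP a' d' k) : x = y := by
  simp only [Finset.mem_Ioc, Finset.mem_Icc] at hd ha hd' ha'
  rcases Nat.lt_trichotomy d d' with hlt | heq | hgt
  · rcases Nat.lt_trichotomy x y with h | h | h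
    · exact absurd (ap_helper k D W hk hW hWD hlt hd.1 hd'.2 hd'.1 h hx1 hx2 hy1 hy2) id
    · exact h
    · exact absurd (ap_helper k D W hk hW hWD hlt hd.1 hd'.2 hd'.1 h hy1 hy2 hx1 hx2) id
  · -- d = d' : the two APs are disjoint unless a = a'
    subst heq
    by_cases haa : a = a'
    · exact absurd (by rw [haa]) hne
    · exfalso
      obtain ⟨i, hi, hxi⟩ := mem_AP.mp hx1
      obtain ⟨i', hi', hxi'⟩ := mem_AP.mp hx2
      rcases Nat.lt_or_ge a a' with h | h
      · have hii : i' < i := by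
          rcases Nat.lt_or_ge i' i with hc | hc
          · exact hc
          · exfalso; have : i * d ≤ i' * d := Nat.mul_le_mul_right _ hc; omega
        have : a' = a + (i - i') * d := by rw [Nat.sub_mul]; omega
        have hd1 : d ≤ (i - i') * d := Nat.le_mul_of_pos_left _ (by omega)
        omega
      · have h' : a' < a := by omega
        have hii : i < i' := by
          rcases Nat.lt_or_ge i i' with hc | hc
          · exact hc
          · exfalso; have : i' * d ≤ i * d := Nat.mul_le_mul_right _ hc; omega
        have : a = a' + (i' - i) * d := by rw [Nat.sub_mul]; omega
        have hd1 : d ≤ (i' - i) * d := Nat.le_mul_of_pos_left _ (by omega)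
        omega
  · rcases Nat.lt_trichotomy x y with h | h | h
    · exact absurd (ap_helper k D W hk hW hWD hgt hd'.1 hd.2 hd.1 h hx2 hx1 hy2 hy1) id
    · exact h
    · exact absurd (ap_helper k D W hk hW hWD hgt hd'.1 hd.2 hd.1 h hy2 hy1 hx2 hx1) id

set_option maxHeartbeats 2000000 in
theorem crux (n k : ℕ) (hk : 1 ≤ k) (hn : 8*k*k ≤ n) :
    (1:ℝ) - 16*(k:ℝ)^3*2^k/(n:ℝ)^2 ≤
      (Nat.card {c : ↥(Finset.Icc 1 n) → Bool // HasMonoKAP n k c} : ℝ) / 2^n := by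
  classical
  have hcardα : Fintype.card ↥(Finset.Icc 1 n) = n := by
    rw [Fintype.card_coe, Nat.card_Icc]
    omega
  set α := ↥(Finset.Icc 1 n) with hα
  have hcardΩ : Fintype.card (α → Bool) = 2^n := by
    rw [Fintype.card_fun, hcardα, Fintype.card_bool]
  -- sizes
  set D := n / k with hD
  set W := D / (2*k) with hW
  have hkpos : 0 < k := hk
  have hD8 : 8*k ≤ D := by
    rw [hD, Nat.le_div_iff_mul_le hkpos]
    exact hn
  have hW4 : 4 ≤ W := by
    rw [hW, Nat.le_div_iff_mul_le (by omega : 0 < 2*k)]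
    calc 4*(2*k) = 8*k := by ring
      _ ≤ D := hD8
  have hWD : 2*k*W ≤ D := by
    have := Nat.div_mul_le_self D (2*k)
    calc 2*k*W = W * (2*k) := by ring
      _ ≤ D := this
  have hkD : k*D ≤ n := by
    have := Nat.div_mul_le_self n k
    calc k*D = D * k := by ring
      _ ≤ n := this
  have hWW : W + W ≤ D := by
    obtain ⟨KW, hKW⟩ : ∃ m, m = k*W := ⟨_, rfl⟩
    have h1 : W ≤ KW := by rw [hKW]; exact Nat.le_mul_of_pos_left _ hkpos
    have h2 : KW + KW ≤ D := by
      have : 2*KW ≤ D := by rw [hKW, ← mul_assoc]; exact hWD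
      omega
    omega
  have hWpos : 1 ≤ W := by omega
  have hDWpos : 1 ≤ D - W := by omega
  -- the family
  set F : Finset (ℕ × ℕ) := (Finset.Ioc (D-W) D) ×ˢ (Finset.Icc 1 (D-W)) with hF
  have hFcard : F.card = W * (D-W) := by
    rw [hF, Finset.card_product, Nat.card_Ioc, Nat.card_Icc]
    congr 1 <;> omega
  have hFd : ∀ p ∈ F, D - W < p.1 ∧ p.1 ≤ D ∧ 1 ≤ p.2 ∧ p.2 ≤ D - W := by
    intro p hp
    rw [hF, Finset.mem_product, Finset.mem_Ioc, Finset.mem_Icc] at hp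
    exact ⟨hp.1.1, hp.1.2, hp.2.1, hp.2.2⟩
  -- the AP of a pair, inside {1,...,n}
  set Qs : ℕ × ℕ → Finset α := fun p => (AP p.2 p.1 k).subtype (fun x => x ∈ Finset.Icc 1 n)
    with hQs
  have hAPsub : ∀ p ∈ F, ∀ x ∈ AP p.2 p.1 k, x ∈ Finset.Icc 1 n := by
    intro p hp x hx
    obtain ⟨hp1, hp2, hp3, hp4⟩ := hFd p hp
    obtain ⟨i, hi, rfl⟩ := mem_AP.mp hx
    rw [Finset.mem_Icc]
    constructor
    · omega
    · obtain ⟨E1, hE1⟩ : ∃ m, m = (k-1)*D := ⟨_, rfl⟩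
      obtain ⟨E2, hE2⟩ : ∃ m, m = k*D := ⟨_, rfl⟩
      have h12 : E1 + D = E2 := by
        rw [hE1, hE2]
        have hk1 : k - 1 + 1 = k := by omega
        calc (k-1)*D + D = ((k-1)+1)*D := by ring
          _ = k*D := by rw [hk1]
      have hiD : i * p.1 ≤ E1 := by
        rw [hE1]
        exact Nat.mul_le_mul (by omega) (by omega)
      rw [← hE2] at hkD
      omega
  have hQcard : ∀ p ∈ F, (Qs p).card = k := by
    intro p hp
    rw [hQs]
    rw [Finset.card_subtype, Finset.filter_true_of_mem (hAPsub p hp),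
      AP_card (by have := (hFd p hp).1; omega)]
  have hQne : ∀ p ∈ F, (Qs p).Nonempty := by
    intro p hp
    rw [← Finset.card_pos, hQcard p hp]
    omega
  have hQinter : ∀ p ∈ F, ∀ q ∈ F, p ≠ q → (Qs p ∩ Qs q).card ≤ 1 := by
    intro p hp q hq hpq
    rw [Finset.card_le_one]
    intro x hx y hy
    rw [Finset.mem_inter] at hx hy
    have hxp := Finset.mem_subtype.mp hx.1
    have hxq := Finset.mem_subtype.mp hx.2
    have hyp := Finset.mem_subtype.mp hy.1
    have hyq := Finset.mem_subtype.mp hy.2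
    obtain ⟨hp1, hp2, hp3, hp4⟩ := hFd p hp
    obtain ⟨hq1, hq2, hq3, hq4⟩ := hFd q hq
    have hne : (p.1, p.2) ≠ (q.1, q.2) := by
      intro h
      apply hpq
      rw [Prod.mk.injEq] at h
      exact Prod.ext h.1 h.2
    exact Subtype.ext (ap_inter_sub k D W hk hWpos hWD
      (Finset.mem_Ioc.mpr ⟨hp1, hp2⟩) (Finset.mem_Icc.mpr ⟨hp3, hp4⟩)
      (Finset.mem_Ioc.mpr ⟨hq1, hq2⟩) (Finset.mem_Icc.mpr ⟨hq3, hq4⟩)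
      hne hxp hxq hyp hyq)
  -- the counting random variable
  set X : (α → Bool) → ℕ := fun c =>
    (F.filter (fun p => ∀ x ∈ Qs p, ∀ y ∈ Qs p, c x = c y)).card with hX
  set T : ℕ := ∑ c : α → Bool, X c with hT
  set Q2 : ℕ := ∑ c : α → Bool, (X c)^2 with hQ2
  -- T computation
  have hTsum : T = ∑ p ∈ F, (Finset.univ.filter fun c : α → Bool => ∀ x ∈ Qs p, ∀ y ∈ Qs p, c x = c y).card := by
    rw [hT]
    have : ∀ c : α → Bool, X c = ∑ p ∈ F, if (∀ x ∈ Qs p, ∀ y ∈ Qs p, c x = c y) then 1 else 0 := by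
      intro c
      have hXc : X c = (F.filter (fun p => ∀ x ∈ Qs p, ∀ y ∈ Qs p, c x = c y)).card := rfl
      rw [hXc]; exact Finset.card_filter _ _
    simp_rw [this]
    rw [Finset.sum_comm]
    congr 1
    funext p
    exact (Finset.card_filter _ _).symm
  have hTval : T * 2^k = F.card * 2^(n+1) := by
    rw [hTsum, Finset.sum_mul]
    rw [Finset.sum_congr rfl (fun p hp => ?_), Finset.sum_const, smul_eq_mul]
    have := count_const_on (Qs p) (hQne p hp)
    rw [hQcard p hp, hcardα] at this
    exact this
  -- Q2 computation
  have hQ2sum : Q2 = ∑ p ∈ F, ∑ q ∈ F,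
      (Finset.univ.filter fun c : α → Bool => (∀ x ∈ Qs p, ∀ y ∈ Qs p, c x = c y) ∧ (∀ x ∈ Qs q, ∀ y ∈ Qs q, c x = c y)).card := by
    rw [hQ2]
    have h1 : ∀ c : α → Bool, (X c)^2
        = ∑ p ∈ F, ∑ q ∈ F, if (∀ x ∈ Qs p, ∀ y ∈ Qs p, c x = c y) ∧ (∀ x ∈ Qs q, ∀ y ∈ Qs q, c x = c y) then 1 else 0 := by
      intro c
      have hXc : X c = (F.filter (fun p => ∀ x ∈ Qs p, ∀ y ∈ Qs p, c x = c y)).card := rfl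
      rw [hXc, sq, Finset.card_filter, Finset.sum_mul_sum]
      congr 1; funext p; congr 1; funext q
      by_cases h1 : (∀ x ∈ Qs p, ∀ y ∈ Qs p, c x = c y) <;>
        by_cases h2 : (∀ x ∈ Qs q, ∀ y ∈ Qs q, c x = c y)
      · rw [if_pos h2, if_pos h1, if_pos (show _ ∧ _ from ⟨h1, h2⟩)]
        norm_num
      · simp [h2]
      · simp [h1]
      · simp [h2]
    simp_rw [h1]
    rw [Finset.sum_comm]
    congr 1
    funext p
    rw [Finset.sum_comm]
    congr 1
    funext q
    exact (Finset.card_filter _ _).symm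
  have hdiag : ∀ p ∈ F, (Finset.univ.filter fun c : α → Bool => (∀ x ∈ Qs p, ∀ y ∈ Qs p, c x = c y) ∧ (∀ x ∈ Qs p, ∀ y ∈ Qs p, c x = c y)).card * 2^(2*k)
      = 2^(n+1+k) := by
    intro p hp
    have hcongr : (Finset.univ.filter fun c : α → Bool => (∀ x ∈ Qs p, ∀ y ∈ Qs p, c x = c y) ∧ (∀ x ∈ Qs p, ∀ y ∈ Qs p, c x = c y))
        = (Finset.univ.filter fun c : α → Bool => ∀ x ∈ Qs p, ∀ y ∈ Qs p, c x = c y) := by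
      apply Finset.filter_congr
      intro c _
      simp
    rw [hcongr]
    have := count_const_on (Qs p) (hQne p hp)
    rw [hQcard p hp, hcardα] at this
    calc (Finset.univ.filter fun c : α → Bool => ∀ x ∈ Qs p, ∀ y ∈ Qs p, c x = c y).card * 2^(2*k)
        = ((Finset.univ.filter fun c : α → Bool => ∀ x ∈ Qs p, ∀ y ∈ Qs p, c x = c y).card * 2^k) * 2^k := by ring
      _ = 2^(n+1) * 2^k := by rw [this]
      _ = 2^(n+1+k) := by rw [← pow_add]
  have hoff : ∀ p ∈ F, ∀ q ∈ F, p ≠ q →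
      (Finset.univ.filter fun c : α → Bool => (∀ x ∈ Qs p, ∀ y ∈ Qs p, c x = c y) ∧ (∀ x ∈ Qs q, ∀ y ∈ Qs q, c x = c y)).card * 2^(2*k) ≤ 2^(n+2) := by
    intro p hp q hq hpq
    have := count_pair_le (Qs p) (Qs q) (hQne p hp) (hQne q hq) (hQinter p hp q hq hpq)
    rw [hQcard p hp, hQcard q hq, hcardα] at this
    have h2k : (2:ℕ)^(2*k) = 2^(k+k) := by rw [two_mul]
    rw [h2k]
    exact this
  have hQ2val : Q2 * 2^(2*k) ≤ F.card * 2^(n+1+k) + F.card * F.card * 2^(n+2) := by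
    rw [hQ2sum, Finset.sum_mul]
    calc ∑ p ∈ F, ((∑ q ∈ F,
          (Finset.univ.filter fun c : α → Bool => (∀ x ∈ Qs p, ∀ y ∈ Qs p, c x = c y) ∧ (∀ x ∈ Qs q, ∀ y ∈ Qs q, c x = c y)).card) * 2^(2*k))
        = ∑ p ∈ F, (∑ q ∈ F,
          (Finset.univ.filter fun c : α → Bool => (∀ x ∈ Qs p, ∀ y ∈ Qs p, c x = c y) ∧ (∀ x ∈ Qs q, ∀ y ∈ Qs q, c x = c y)).card * 2^(2*k)) := by
          congr 1; funext p; rw [Finset.sum_mul]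
      _ ≤ ∑ p ∈ F, (2^(n+1+k) + F.card * 2^(n+2)) := by
          apply Finset.sum_le_sum
          intro p hp
          rw [← Finset.add_sum_erase _ _ hp]
          apply Nat.add_le_add
          · exact le_of_eq (hdiag p hp)
          · calc ∑ q ∈ F.erase p,
                (Finset.univ.filter fun c : α → Bool => (∀ x ∈ Qs p, ∀ y ∈ Qs p, c x = c y) ∧ (∀ x ∈ Qs q, ∀ y ∈ Qs q, c x = c y)).card * 2^(2*k)
                ≤ ∑ q ∈ F.erase p, 2^(n+2) := by
                  apply Finset.sum_le_sum
                  intro q hq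
                  exact hoff p hp q (Finset.mem_of_mem_erase hq)
                    (fun h => (Finset.ne_of_mem_erase hq) h.symm)
              _ = (F.erase p).card * 2^(n+2) := by rw [Finset.sum_const, smul_eq_mul]
              _ ≤ F.card * 2^(n+2) := by
                  apply Nat.mul_le_mul_right
                  exact Finset.card_le_card (Finset.erase_subset _ _)
      _ = F.card * 2^(n+1+k) + F.card * F.card * 2^(n+2) := by
          rw [Finset.sum_const, smul_eq_mul]
          ring
  have hXne : ∀ c : α → Bool, X c ≠ 0 →
      (F.filter (fun p => ∀ x ∈ Qs p, ∀ y ∈ Qs p, c x = c y)).Nonempty := by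
    intro c hc
    rw [← Finset.card_pos]
    exact Nat.pos_of_ne_zero hc
  -- the set of colorings with a monochromatic AP from the family
  set B : Finset (α → Bool) := Finset.univ.filter (fun c => X c ≠ 0) with hB
  have hTB : T = ∑ c ∈ B, X c := by
    rw [hT, hB]
    exact (Finset.sum_filter_ne_zero _).symm
  have hCS : (T:ℝ)^2 ≤ (B.card : ℝ) * (Q2 : ℝ) := by
    have h1 : (T:ℝ) = ∑ c ∈ B, (X c : ℝ) := by
      rw [hTB]; push_cast; rfl
    have h2 : (∑ c ∈ B, (1:ℝ) * (X c : ℝ))^2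
        ≤ (∑ c ∈ B, (1:ℝ)^2) * (∑ c ∈ B, (X c : ℝ)^2) :=
      Finset.sum_mul_sq_le_sq_mul_sq _ _ _
    simp only [one_mul, one_pow] at h2
    rw [Finset.sum_const, nsmul_eq_mul, mul_one] at h2
    have h3 : (∑ c ∈ B, (X c : ℝ)^2) ≤ (Q2 : ℝ) := by
      rw [hQ2]
      push_cast
      apply Finset.sum_le_sum_of_subset_of_nonneg (Finset.filter_subset _ _)
      intro c _ _
      positivity
    calc (T:ℝ)^2 = (∑ c ∈ B, (X c : ℝ))^2 := by rw [h1]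
      _ ≤ (B.card : ℝ) * (∑ c ∈ B, (X c : ℝ)^2) := h2
      _ ≤ (B.card : ℝ) * (Q2 : ℝ) := by
          apply mul_le_mul_of_nonneg_left h3 (by positivity)
  clear_value X T Q2
  clear hX hT hQ2 hTsum hQ2sum hTB
  -- B is contained in the good set
  set G : Finset (α → Bool) := Finset.univ.filter (fun c => HasMonoKAP n k c) with hG
  have hBG : B ⊆ G := by
    intro c hc
    rw [hB, Finset.mem_filter] at hc
    rw [hG, Finset.mem_filter]
    refine ⟨Finset.mem_univ _, ?_⟩
    obtain ⟨p, hpmem⟩ := hXne c hc.2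
    rw [Finset.mem_filter] at hpmem
    obtain ⟨hpF, hpM⟩ := hpmem
    obtain ⟨hp1, hp2, hp3, hp4⟩ := hFd p hpF
    refine ⟨AP p.2 p.1 k, ⟨p.2, p.1, hp3, by omega, ?_, rfl⟩, ?_⟩
    · obtain ⟨E1, hE1⟩ : ∃ m, m = (k-1)*D := ⟨_, rfl⟩
      obtain ⟨E2, hE2⟩ : ∃ m, m = k*D := ⟨_, rfl⟩
      have h12 : E1 + D = E2 := by
        rw [hE1, hE2]
        have hk1 : k - 1 + 1 = k := by omega
        calc (k-1)*D + D = ((k-1)+1)*D := by ring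
          _ = k*D := by rw [hk1]
      have hiD : (k-1) * p.1 ≤ E1 := by
        rw [hE1]
        exact Nat.mul_le_mul le_rfl (by omega)
      rw [← hE2] at hkD
      omega
    · intro x y hx hy
      refine hpM x ?_ y ?_ <;> rw [hQs] <;> exact Finset.mem_subtype.mpr (by assumption)
  have hGcard : Nat.card {c : α → Bool // HasMonoKAP n k c} = G.card := by
    rw [Nat.card_eq_fintype_card, hG, Fintype.card_subtype]
  -- now the real arithmetic
  have hFpos : 0 < F.card := by
    rw [hFcard]
    exact Nat.mul_pos (by omega) (by omega)
  set a : ℝ := (F.card : ℝ) with ha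
  set t : ℝ := (T : ℝ) with ht
  set q : ℝ := (Q2 : ℝ) with hq
  have ha_pos : 0 < a := by rw [ha]; exact_mod_cast hFpos
  have h1 : t * 2^k = a * 2^(n+1) := by
    rw [ht, ha]
    exact_mod_cast hTval
  have ht_pos : 0 < t := by
    have h2k : (0:ℝ) < 2^k := by positivity
    nlinarith [pow_pos (show (0:ℝ) < 2 by norm_num) (n+1)]
  have h2 : q * 2^(2*k) ≤ a * 2^(n+1+k) + a*a*2^(n+2) := by
    rw [hq, ha]
    exact_mod_cast hQ2val
  have h3 : t^2 ≤ (B.card : ℝ) * q := hCS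
  have hq_pos : 0 < q := by
    by_contra h
    push_neg at h
    have : (B.card : ℝ) * q ≤ 0 := by
      rcases le_or_gt q 0 with h' | h'
      · exact mul_nonpos_of_nonneg_of_nonpos (by positivity) h'
      · linarith
    nlinarith
  -- s1 : q * 2^n ≤ t*2^n + t^2
  have e1 : a * 2^(n+1+k) = t * 2^(2*k) := by
    have : a * 2^(n+1+k) = (a * 2^(n+1)) * 2^k := by rw [pow_add]; ring
    rw [this, ← h1, two_mul, pow_add]; ring
  have e2 : a * a * 2^(n+2) * 2^n = t^2 * 2^(2*k) := by
    have l2 : ((2:ℝ))^(n+2) * 2^n = 2^(n+1) * 2^(n+1) := by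
      rw [← pow_add, ← pow_add]
      congr 1
      omega
    calc a * a * 2^(n+2) * 2^n = a*a*(2^(n+2) * 2^n) := by ring
      _ = a*a*(2^(n+1) * 2^(n+1)) := by rw [l2]
      _ = (a * 2^(n+1))^2 := by ring
      _ = (t * 2^k)^2 := by rw [h1]
      _ = t^2 * 2^(2*k) := by rw [two_mul, pow_add]; ring
  have s1 : q * 2^n ≤ t * 2^n + t^2 := by
    have h2' := mul_le_mul_of_nonneg_right h2 (show (0:ℝ) ≤ 2^n by positivity)
    rw [add_mul, e2] at h2'
    have h2'' : q * 2^(2*k) * 2^n ≤ t * 2^(2*k) * 2^n + t^2 * 2^(2*k) := by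
      calc q * 2^(2*k) * 2^n ≤ a * 2^(n+1+k) * 2^n + t^2 * 2^(2*k) := h2'
        _ = t * 2^(2*k) * 2^n + t^2 * 2^(2*k) := by rw [e1]
    have hpos : (0:ℝ) < 2^(2*k) := by positivity
    have := le_of_mul_le_mul_right (by
      calc (q * 2^n) * 2^(2*k) = q * 2^(2*k) * 2^n := by ring
        _ ≤ t * 2^(2*k) * 2^n + t^2 * 2^(2*k) := h2''
        _ = (t * 2^n + t^2) * 2^(2*k) := by ring) hpos
    exact this
  set g : ℝ := (G.card : ℝ) with hg
  have hg_nonneg : 0 ≤ g := by positivity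
  have hBg : (B.card : ℝ) ≤ g := by
    rw [hg]
    exact_mod_cast Finset.card_le_card hBG
  have hGle : g ≤ 2^n := by
    rw [hg]
    calc (G.card : ℝ) ≤ (Fintype.card (α → Bool) : ℝ) := by
          exact_mod_cast Finset.card_le_card (Finset.subset_univ _) |>.trans
            (le_of_eq Finset.card_univ)
      _ = 2^n := by rw [hcardΩ]; push_cast; ring
  -- star : t * 2^n ≤ g * (2^n + t)
  have star : t * 2^n ≤ g * (2^n + t) := by
    have k1 : t^2 ≤ g * q := le_trans h3 (mul_le_mul_of_nonneg_right hBg (le_of_lt hq_pos))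
    have k2 : t^2 * 2^n ≤ g * (q * 2^n) :=
      by calc t^2 * 2^n ≤ (g*q) * 2^n :=
            mul_le_mul_of_nonneg_right k1 (by positivity)
        _ = g * (q * 2^n) := by ring
    have k3 : g * (q * 2^n) ≤ g * (t * 2^n + t^2) :=
      mul_le_mul_of_nonneg_left s1 hg_nonneg
    have k4 : t^2 * 2^n ≤ g * (t*2^n + t^2) := le_trans k2 k3
    have : (t * 2^n) * t ≤ (g * (2^n + t)) * t := by
      calc (t * 2^n) * t = t^2 * 2^n := by ring
        _ ≤ g * (t*2^n + t^2) := k4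
        _ = (g * (2^n + t)) * t := by ring
    exact le_of_mul_le_mul_right this ht_pos
  -- delta
  set δ : ℝ := 16*(k:ℝ)^3*2^k/(n:ℝ)^2 with hδ
  have hn_pos : (0:ℝ) < n := by
    have h8 : 0 < 8*k*k := by positivity
    have : 0 < n := by omega
    exact_mod_cast this
  have hδ_nonneg : 0 ≤ δ := by rw [hδ]; positivity
  -- size : n^2 ≤ 32 k^3 a
  have hsize : (n:ℝ)^2 ≤ 32*(k:ℝ)^3 * a := by
    have hn2kD : (n:ℝ) ≤ 2*(k:ℝ)*(D:ℝ) := by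
      have hnat : n ≤ 2*(k*D) := by
        obtain ⟨KD, hKD⟩ : ∃ m, m = k*D := ⟨_, rfl⟩
        have hmod := Nat.div_add_mod n k
        have hr : n % k < k := Nat.mod_lt _ hkpos
        have h1 : k ≤ KD := by
          rw [hKD]
          exact Nat.le_mul_of_pos_right _ (by omega)
        have h2 : KD + n % k = n := by rw [hKD, hD] at *; omega
        omega
      calc (n:ℝ) ≤ (2*(k*D) : ℕ) := by exact_mod_cast hnat
        _ = 2*(k:ℝ)*(D:ℝ) := by push_cast; ring
    have hD4kW : (D:ℝ) ≤ 4*(k:ℝ)*(W:ℝ) := by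
      have hnat : D ≤ 2*(2*k*W) := by
        obtain ⟨KW, hKW⟩ : ∃ m, m = 2*k*W := ⟨_, rfl⟩
        have hmod := Nat.div_add_mod D (2*k)
        have hr : D % (2*k) < 2*k := Nat.mod_lt _ (by omega)
        have h1 : 2*k ≤ KW := by
          rw [hKW]
          exact Nat.le_mul_of_pos_right _ (by omega)
        have h2 : KW + D % (2*k) = D := by
          rw [hKW, hW] at *
          rw [mul_assoc] at *
          omega
        omega
      calc (D:ℝ) ≤ (2*(2*k*W) : ℕ) := by exact_mod_cast hnat
        _ = 4*(k:ℝ)*(W:ℝ) := by push_cast; ring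
    have hDW2 : (D:ℝ) ≤ 2*((D:ℝ) - (W:ℝ)) := by
      have : (W:ℝ) + (W:ℝ) ≤ (D:ℝ) := by exact_mod_cast hWW
      linarith
    have haval : a = (W:ℝ) * ((D:ℝ) - (W:ℝ)) := by
      rw [ha, hFcard]
      push_cast [Nat.cast_sub (by omega : W ≤ D)]
      ring
    have hWr : (0:ℝ) < W := by exact_mod_cast (by omega : 0 < W)
    have hDr : (0:ℝ) < D := by exact_mod_cast (by omega : 0 < D)
    have hkr : (0:ℝ) < k := by exact_mod_cast hkpos
    have hDWr : (0:ℝ) < (D:ℝ) - (W:ℝ) := by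
      have : (W:ℝ) + (W:ℝ) ≤ (D:ℝ) := by exact_mod_cast hWW
      linarith
    rw [haval]
    nlinarith [mul_le_mul hn2kD hn2kD (by positivity) (by positivity),
      mul_le_mul_of_nonneg_right hD4kW (le_of_lt hDr),
      mul_le_mul_of_nonneg_left hDW2 (by positivity : (0:ℝ) ≤ 16*(k:ℝ)^3*(W:ℝ)),
      mul_le_mul_of_nonneg_left hDW2 (by positivity : (0:ℝ) ≤ (k:ℝ)^2*(W:ℝ)*4*(k:ℝ))]
  -- hδt : 2^n ≤ δ * t
  have hδa : (2:ℝ)^k ≤ 2*δ*a := by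
    rw [hδ]
    rw [show (2:ℝ)*(16*(k:ℝ)^3*2^k/(n:ℝ)^2)*a = (2*(16*(k:ℝ)^3*2^k)*a)/(n:ℝ)^2 by ring]
    rw [le_div_iff₀ (by positivity : (0:ℝ) < (n:ℝ)^2)]
    calc (2:ℝ)^k * (n:ℝ)^2 ≤ (2:ℝ)^k * (32*(k:ℝ)^3*a) :=
          mul_le_mul_of_nonneg_left hsize (by positivity)
      _ = 2*(16*(k:ℝ)^3*2^k)*a := by ring
  have hδt : (2:ℝ)^n ≤ δ * t := by
    have h2k : (0:ℝ) < 2^k := by positivity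
    have key : (2:ℝ)^n * 2^k ≤ (δ * t) * 2^k := by
      calc (2:ℝ)^n * 2^k ≤ (2:ℝ)^n * (2*δ*a) := mul_le_mul_of_nonneg_left hδa (by positivity)
        _ = δ * (a * 2^(n+1)) := by rw [pow_add]; ring
        _ = δ * (t * 2^k) := by rw [h1]
        _ = (δ * t) * 2^k := by ring
    exact le_of_mul_le_mul_right key h2k
  -- conclusion
  rw [hGcard]
  rw [← hg]
  rw [le_div_iff₀ (by positivity : (0:ℝ) < (2:ℝ)^n)]
  have h2n_nonneg : (0:ℝ) ≤ 2^n := by positivity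
  have hδ2n : (0:ℝ) ≤ δ * 2^n := mul_nonneg hδ_nonneg h2n_nonneg
  have hlin : ((1:ℝ) - δ) * (2^n + t) ≤ t := by nlinarith [hδt, hδ2n]
  have hfin : ((1:ℝ) - δ) * 2^n * (2^n + t) ≤ g * (2^n + t) := by
    calc ((1:ℝ) - δ) * 2^n * (2^n + t) = (((1:ℝ) - δ) * (2^n + t)) * 2^n := by ring
      _ ≤ t * 2^n := mul_le_mul_of_nonneg_right hlin h2n_nonneg
      _ ≤ g * (2^n + t) := star
  have hsum_pos : (0:ℝ) < 2^n + t := by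
    have : (0:ℝ) < 2^n := by positivity
    linarith
  exact le_of_mul_le_mul_right hfin hsum_pos

theorem ratio_le_one (n k : ℕ) :
    (Nat.card {c : ↥(Finset.Icc 1 n) → Bool // HasMonoKAP n k c} : ℝ) / 2^n ≤ 1 := by
  classical
  rw [div_le_one (by positivity)]
  have h1 : Nat.card {c : ↥(Finset.Icc 1 n) → Bool // HasMonoKAP n k c}
      ≤ Fintype.card (↥(Finset.Icc 1 n) → Bool) := by
    rw [Nat.card_eq_fintype_card]
    exact Fintype.card_subtype_le _
  have h2 : Fintype.card (↥(Finset.Icc 1 n) → Bool) = 2^n := by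
    rw [Fintype.card_fun, Fintype.card_coe, Nat.card_Icc, Fintype.card_bool]
    congr 1
  calc (Nat.card {c : ↥(Finset.Icc 1 n) → Bool // HasMonoKAP n k c} : ℝ)
      ≤ ((2^n : ℕ) : ℝ) := by exact_mod_cast h1.trans (le_of_eq h2)
    _ = 2^n := by push_cast; ring

theorem pow_helper : ∀ m : ℕ, 7 ≤ m → 8*(2*m+1) ≤ 2^m := by
  intro m hm
  induction m, hm using Nat.le_induction with
  | base => norm_num
  | succ m hm ih =>
    have h := pow_succ 2 m
    omega

theorem prob_mono_kap_tendsto_one' (f : ℕ → ℝ) (hf1 : ∀ k, 1 ≤ f k)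
    (hf : Filter.Tendsto f Filter.atTop Filter.atTop) :
    Filter.Tendsto
      (fun k : ℕ =>
        (Nat.card {c : ↥(Finset.Icc 1 (Nplus f k)) → Bool //
            HasMonoKAP (Nplus f k) k c} : ℝ) / 2 ^ (Nplus f k))
      Filter.atTop (nhds 1) := by
  set r : ℕ → ℝ := fun k =>
    (Nat.card {c : ↥(Finset.Icc 1 (Nplus f k)) → Bool //
        HasMonoKAP (Nplus f k) k c} : ℝ) / 2 ^ (Nplus f k) with hr
  have hup : ∀ k, r k ≤ 1 := fun k => ratio_le_one (Nplus f k) k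
  have hlow : ∀ k : ℕ, 14 ≤ k → 1 - 16/(f k)^2 ≤ r k := by
    intro k hk
    set N := Nplus f k with hN
    have hfk : (1:ℝ) ≤ f k := hf1 k
    have hkR : (14:ℝ) ≤ (k:ℝ) := by exact_mod_cast hk
    -- N ≥ R
    set R : ℝ := (2 : ℝ) ^ ((k : ℝ) / 2) * (k : ℝ) ^ ((3 : ℝ) / 2) * f k with hR
    have hRN : R ≤ (N:ℝ) := by
      rw [hN, Nplus]
      exact Nat.le_ceil _
    -- 2^(k/2) ≥ 8k
    have h2half : (8:ℝ)*(k:ℝ) ≤ (2:ℝ) ^ ((k : ℝ) / 2) := by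
      set m := k / 2 with hm
      have hm7 : 7 ≤ m := by omega
      have hk2m : k ≤ 2*m+1 := by omega
      have hnat : 8*k ≤ 2^m := le_trans (by omega) (pow_helper m hm7)
      have hcast : ((8*k : ℕ):ℝ) ≤ ((2^m : ℕ):ℝ) := by exact_mod_cast hnat
      have hmk : ((m:ℕ):ℝ) ≤ (k:ℝ)/2 := by
        rw [le_div_iff₀ (by norm_num : (0:ℝ) < 2)]
        have h2m : 2*m ≤ k := by omega
        calc ((m:ℕ):ℝ)*2 = ((2*m : ℕ):ℝ) := by push_cast; ring
          _ ≤ (k:ℝ) := by exact_mod_cast h2m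
      have hmono : ((2:ℝ))^((m:ℕ):ℝ) ≤ (2:ℝ)^((k:ℝ)/2) :=
        Real.rpow_le_rpow_of_exponent_le (by norm_num) hmk
      have hrw : ((2:ℝ))^((m:ℕ):ℝ) = ((2^m : ℕ):ℝ) := by
        rw [Real.rpow_natCast]
        push_cast
        ring
      calc (8:ℝ)*(k:ℝ) = ((8*k : ℕ):ℝ) := by push_cast; ring
        _ ≤ ((2^m : ℕ):ℝ) := hcast
        _ = ((2:ℝ))^((m:ℕ):ℝ) := hrw.symm
        _ ≤ (2:ℝ)^((k:ℝ)/2) := hmono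
    -- k^(3/2) ≥ k
    have h32 : (k:ℝ) ≤ (k:ℝ) ^ ((3:ℝ)/2) := by
      have h1k : (1:ℝ) ≤ (k:ℝ) := by linarith
      calc (k:ℝ) = (k:ℝ) ^ (1:ℝ) := (Real.rpow_one _).symm
        _ ≤ (k:ℝ) ^ ((3:ℝ)/2) := Real.rpow_le_rpow_of_exponent_le h1k (by norm_num)
    -- R ≥ 8k²
    have hkpos : (0:ℝ) < (k:ℝ) := by linarith
    have hR8 : (8:ℝ)*(k:ℝ)*(k:ℝ) ≤ R := by
      rw [hR]
      calc (8:ℝ)*(k:ℝ)*(k:ℝ) = ((8:ℝ)*(k:ℝ)) * (k:ℝ) * 1 := by ring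
        _ ≤ (2:ℝ)^((k:ℝ)/2) * (k:ℝ)^((3:ℝ)/2) * f k := by
            apply mul_le_mul
            · exact mul_le_mul h2half h32 (le_of_lt hkpos) (by positivity)
            · exact hfk
            · norm_num
            · positivity
    have hN8 : 8*k*k ≤ N := by
      have : ((8*k*k : ℕ):ℝ) ≤ (N:ℝ) := by
        push_cast
        linarith
      exact_mod_cast this
    -- crux
    have hcrux := crux N k (by omega) hN8
    -- bound δ by 16/f²
    have hNpos : (0:ℝ) < (N:ℝ) := by
      have : 0 < 8*k*k := by positivity
      have : 0 < N := by omega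
      exact_mod_cast this
    have hRpos : (0:ℝ) < R := by
      calc (0:ℝ) < 8*(k:ℝ)*(k:ℝ) := by positivity
        _ ≤ R := hR8
    have hR2 : R^2 = 2^k * (k:ℝ)^3 * (f k)^2 := by
      rw [hR]
      have e1 : ((2:ℝ)^((k:ℝ)/2))^2 = (2:ℝ)^k := by
        rw [sq, ← Real.rpow_add (by norm_num : (0:ℝ) < 2)]
        rw [show (k:ℝ)/2 + (k:ℝ)/2 = ((k:ℕ):ℝ) by ring]
        rw [Real.rpow_natCast]
      have e2 : ((k:ℝ)^((3:ℝ)/2))^2 = (k:ℝ)^3 := by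
        rw [sq, ← Real.rpow_add hkpos]
        rw [show (3:ℝ)/2 + (3:ℝ)/2 = ((3:ℕ):ℝ) by norm_num]
        rw [Real.rpow_natCast]
      calc ((2:ℝ)^((k:ℝ)/2) * (k:ℝ)^((3:ℝ)/2) * f k)^2
          = ((2:ℝ)^((k:ℝ)/2))^2 * ((k:ℝ)^((3:ℝ)/2))^2 * (f k)^2 := by ring
        _ = 2^k * (k:ℝ)^3 * (f k)^2 := by rw [e1, e2]
    have hδbound : 16*(k:ℝ)^3*2^k/(N:ℝ)^2 ≤ 16/(f k)^2 := by
      rw [div_le_div_iff₀ (by positivity) (by positivity)]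
      have hN2 : 2^k * (k:ℝ)^3 * (f k)^2 ≤ (N:ℝ)^2 := by
        rw [← hR2]
        exact pow_le_pow_left₀ (le_of_lt hRpos) hRN 2
      nlinarith [hN2]
    calc 1 - 16/(f k)^2 ≤ 1 - 16*(k:ℝ)^3*2^k/(N:ℝ)^2 := by linarith
      _ ≤ r k := hcrux
  -- limits
  have hsq : Filter.Tendsto (fun k => (f k)^2) Filter.atTop Filter.atTop := by
    apply Filter.tendsto_atTop_mono (fun k => le_self_pow₀ (hf1 k) (by norm_num)) hf
  have h0 : Filter.Tendsto (fun k => 16/(f k)^2) Filter.atTop (nhds 0) :=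
    Filter.Tendsto.div_atTop tendsto_const_nhds hsq
  have h1T : Filter.Tendsto (fun k => 1 - 16/(f k)^2) Filter.atTop (nhds 1) := by
    have := Filter.Tendsto.const_sub (1:ℝ) h0
    simpa using this
  apply tendsto_of_tendsto_of_tendsto_of_le_of_le' h1T tendsto_const_nhds
  · filter_upwards [Filter.eventually_ge_atTop 14] with k hk
    exact hlow k hk
  · filter_upwards with k
    exact hup k

/-- If `f(k) → ∞`, then the proportion of 2-colorings of `{1, ..., N⁺(k)}`
containing a monochromatic `k`-term arithmetic progression tends to `1`. -/
theorem prob_mono_kap_tendsto_one (f : ℕ → ℝ) (hf1 : ∀ k, 1 ≤ f k)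
    (hf : Filter.Tendsto f Filter.atTop Filter.atTop) :
    Filter.Tendsto
      (fun k : ℕ =>
        (Nat.card {c : ↥(Finset.Icc 1 (Nplus f k)) → Bool //
            HasMonoKAP (Nplus f k) k c} : ℝ) / 2 ^ (Nplus f k))
      Filter.atTop (nhds 1) :=
  prob_mono_kap_tendsto_one' f hf1 hf
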